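/- arXiv:1501.03238 — 2 statements merged into one kernel-verified Lean document; each statement's English description precedes it below -/
import Mathlib

section
/- Fix m ≥ 1 and a complementary alphabet with 2m letters. The number |P(n,m)| of words of length 2n admitting at least one valid plane tree equals the sum over all compositions λ = (λ₁,...,λ_k) of n of (2m)^k · (2m−1)^{n−k} · ∏_{i=1}^{k} C_{λ_i − 1}, where C_j is the j-th Catalan number. -/
namespace CVW
open scoped Classical
section Basic

variable {A : Type*}

/-- one step of the stack-reduction. -/
noncomputable def step (comp : A → A) (L : List A) (a : A) : List A :=
  if L.head? = some (comp a) then L.tail else a :: L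

/-- the reduced stack (reversed reduced word) of `w`. -/
noncomputable def Rl (comp : A → A) (w : List A) : List A := w.foldl (step comp) []

/-- reduced stacks: no adjacent complementary pair. -/
def Red (comp : A → A) (L : List A) : Prop := List.IsChain (fun x y => y ≠ comp x) L

variable (comp : A → A) (hinv : Function.Involutive comp)

theorem step_len (L : List A) (a : A) :
    (step comp L a).length + 1 = L.length ∨ (step comp L a).length = L.length + 1 := by
  unfold step
  split
  · rename_i h
    cases L with
    | nil => simp at h
    | cons x t => left; simp
  · right; simp

theorem red_step {L : List A} (h : Red comp L) (a : A) : Red comp (step comp L a) := by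
  unfold step
  split
  · rename_i hh
    cases L with
    | nil => simp at hh
    | cons x t => exact h.tail
  · rename_i hh
    cases L with
    | nil => simp [Red]
    | cons x t =>
      refine List.isChain_cons_cons.2 ⟨?_, h⟩
      intro hx
      exact hh (by simp [hx])

include hinv in
theorem step_step {L : List A} (h : Red comp L) (a : A) :
    step comp (step comp L a) (comp a) = L := by
  unfold step
  split
  · rename_i hh
    cases L with
    | nil => simp at hh
    | cons x t =>
      simp only [List.head?_cons, Option.some.injEq] at hh
      subst hh
      simp only [List.tail_cons]
      cases t with
      | nil => simp [hinv a]
      | cons y s =>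
        have hy : y ≠ comp (comp a) := (List.isChain_cons_cons.1 h).1
        simp [hy]
  · simp [hinv a]

theorem red_foldl {L : List A} (h : Red comp L) (w : List A) :
    Red comp (w.foldl (step comp) L) := by
  induction w generalizing L with
  | nil => exact h
  | cons a t ih => exact ih (red_step comp h a)

theorem red_Rl (w : List A) : Red comp (Rl comp w) :=
  red_foldl comp (by simp [Red]) w

theorem Rl_append (u v : List A) :
    Rl comp (u ++ v) = v.foldl (step comp) (Rl comp u) := by
  simp [Rl, List.foldl_append]

theorem Rl_append_nil {u v : List A} (h : Rl comp u = []) :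
    Rl comp (u ++ v) = Rl comp v := by
  rw [Rl_append, h]; rfl

include hinv in
theorem foldl_cancel_pair {L : List A} (h : Red comp L) (x y : List A) (a : A) :
    (x ++ a :: comp a :: y).foldl (step comp) L = (x ++ y).foldl (step comp) L := by
  have h1 : Red comp (x.foldl (step comp) L) := red_foldl comp h x
  have : (a :: comp a :: y).foldl (step comp) (x.foldl (step comp) L)
      = y.foldl (step comp) (x.foldl (step comp) L) := by
    simp only [List.foldl_cons]
    rw [step_step comp hinv h1]
  simp [List.foldl_append, this]

include hinv in
theorem Rl_cancel_pair (x y : List A) (a : A) :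
    Rl comp (x ++ a :: comp a :: y) = Rl comp (x ++ y) :=
  foldl_cancel_pair comp hinv (by simp [Red]) x y a

theorem foldl_parity : ∀ (w L : List A),
    ((w.foldl (step comp) L).length + w.length) % 2 = L.length % 2 := by
  intro w
  induction w with
  | nil => simp
  | cons a t ih =>
    intro L
    have := ih (step comp L a)
    rcases step_len comp L a with h | h <;> simp only [List.foldl_cons, List.length_cons] <;> omega

theorem even_length_of_Rl_nil {w : List A} (h : Rl comp w = []) : Even w.length := by
  have := foldl_parity comp w []
  rw [Rl] at h
  rw [h] at this
  refine Nat.even_iff.2 ?_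
  simpa using this

include hinv in
theorem red_Rl_eq {w : List A} (h : Red comp w) : Rl comp w = w.reverse := by
  induction w using List.reverseRecOn with
  | nil => rfl
  | append_singleton w b ih =>
    have hw : Red comp w := h.prefix ⟨[b], rfl⟩
    rw [Rl, List.foldl_append, ← Rl, ih hw]
    simp only [List.foldl_cons, List.foldl_nil, List.reverse_append, List.reverse_cons,
      List.reverse_nil, List.nil_append, List.singleton_append]
    unfold step
    split
    · rename_i hh
      exfalso
      rw [List.head?_reverse] at hh
      have := (List.isChain_append.1 h).2.2
      cases w with
      | nil => simp at hh
      | cons c s =>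
        have hg : (c :: s).getLast? = some (comp b) := hh
        have hb : b ≠ comp (comp b) := by
          refine this (comp b) hg b ?_
          simp
        exact hb (hinv b).symm
    · rfl

include hinv in
theorem exists_adj_pair {w : List A} (hne : w ≠ []) (h : Rl comp w = []) :
    ∃ x a y, w = x ++ a :: comp a :: y := by
  by_cases hr : Red comp w
  · exfalso
    have := red_Rl_eq comp hinv hr
    rw [h] at this
    exact hne (by simpa using this.symm)
  · rw [Red, List.isChain_iff_getElem] at hr
    push_neg at hr
    obtain ⟨i, hi, hcomp⟩ := hr
    refine ⟨w.take i, w[i], w.drop (i + 2), ?_⟩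
    have h1 : i < w.length := by omega
    have h2 : i + 1 < w.length := by omega
    rw [← hcomp]
    conv_lhs => rw [← List.take_append_drop i w]
    congr 1
    rw [List.drop_eq_getElem_cons h1, List.drop_eq_getElem_cons h2]

@[simp] theorem step_nil (a : A) : step comp [] a = [a] := by simp [step]

@[simp] theorem Rl_nil : Rl comp [] = [] := rfl

theorem Rl_snoc (w : List A) (x : A) :
    Rl comp (w ++ [x]) = step comp (Rl comp w) x := by
  simp [Rl, List.foldl_append]

@[simp] theorem Rl_singleton (b : A) : Rl comp [b] = [b] := by
  simp [Rl]

include hinv in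
theorem bottom₁ {a : A} {p : List A}
    (hyp : ∀ q, q <+: p → Rl comp q ≠ [comp a]) :
    p.foldl (step comp) [a] = Rl comp p ++ [a] := by
  induction p using List.reverseRecOn with
  | nil => simp
  | append_singleton q x ih =>
    have hq : ∀ u, u <+: q → Rl comp u ≠ [comp a] :=
      fun u hu => hyp u (hu.trans ⟨[x], rfl⟩)
    rw [List.foldl_append, ih hq]
    simp only [List.foldl_cons, List.foldl_nil]
    rw [Rl_snoc]
    cases hR : Rl comp q with
    | nil =>
      have hx : x ≠ comp a := by
        intro hxc
        refine hyp (q ++ [x]) (by rfl) ?_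
        rw [Rl_snoc, hR, step_nil, hxc]
      simp only [List.nil_append, step]
      have : ¬ (([a] : List A).head? = some (comp x)) := by
        simp only [List.head?_cons, Option.some.injEq]
        intro hac
        exact hx (by rw [hac, hinv])
      rw [if_neg this, if_neg (by simp)]
      simp
    | cons h t =>
      by_cases hc : h = comp x
      · simp [step, hc]
      · simp [step, hc]

include hinv in
theorem bottom₂ {a : A} {p : List A}
    (hyp : ∀ q, q <+: p → q.foldl (step comp) [a] ≠ []) :
    p.foldl (step comp) [a] = Rl comp p ++ [a] := by
  induction p using List.reverseRecOn with
  | nil => simp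
  | append_singleton q x ih =>
    have hq : ∀ u, u <+: q → u.foldl (step comp) [a] ≠ [] :=
      fun u hu => hyp u (hu.trans ⟨[x], rfl⟩)
    rw [List.foldl_append, ih hq]
    simp only [List.foldl_cons, List.foldl_nil]
    rw [Rl_snoc]
    cases hR : Rl comp q with
    | nil =>
      have hx : x ≠ comp a := by
        intro hxc
        refine hyp (q ++ [x]) (by rfl) ?_
        rw [List.foldl_append, ih hq, hR]
        simp only [List.nil_append, List.foldl_cons, List.foldl_nil, step, hxc,
          List.head?_cons]
        simp [hinv a]
      simp only [List.nil_append, step]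
      have : ¬ (([a] : List A).head? = some (comp x)) := by
        simp only [List.head?_cons, Option.some.injEq]
        intro hac
        exact hx (by rw [hac, hinv])
      rw [if_neg this, if_neg (by simp)]
      simp
    | cons h t =>
      by_cases hc : h = comp x
      · simp [step, hc]
      · simp [step, hc]

include hinv in
theorem bottom_ne {a : A} {p : List A}
    (hyp : ∀ q, q <+: p → Rl comp q ≠ [comp a]) :
    p.foldl (step comp) [a] ≠ [] := by
  rw [bottom₁ comp hinv hyp]; simp

include hinv in
theorem Rl_ne_single {a : A} {p : List A}
    (hyp : ∀ q, q <+: p → q.foldl (step comp) [a] ≠ []) :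
    Rl comp p ≠ [comp a] := by
  intro hc
  have hb := bottom₂ comp hinv hyp
  have hred : Red comp (p.foldl (step comp) [a]) :=
    red_foldl comp (by simp [Red]) p
  rw [hb, hc] at hred
  have : a ≠ comp (comp a) := List.isChain_cons_cons.1 hred |>.1
  exact this (hinv a).symm



end Basic
end CVW

/-!
Model: a plane tree with n edges is encoded as a non-crossing perfect matching
on the 2n half-edge positions `Fin (2*n)`; a matched pair (i,j) with i < j is
the edge e(i,j). A word of length 2n is a function `Fin (2*n) → A`.
-/

/-- `M` is a perfect matching on the positions `Fin (2*n)`. -/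
def IsMatchingF (n : ℕ) (M : Finset (Fin (2 * n) × Fin (2 * n))) : Prop :=
  (∀ p ∈ M, p.1 < p.2) ∧ (∀ k : Fin (2 * n), ∃! p, p ∈ M ∧ (p.1 = k ∨ p.2 = k))

/-- No two matched pairs cross. -/
def NonCrossingF (n : ℕ) (M : Finset (Fin (2 * n) × Fin (2 * n))) : Prop :=
  ∀ p ∈ M, ∀ q ∈ M, ¬ (p.1 < q.1 ∧ q.1 < p.2 ∧ p.2 < q.2)

/-- A plane tree on `n` edges: a non-crossing perfect matching. -/
def IsPlaneTreeF (n : ℕ) (M : Finset (Fin (2 * n) × Fin (2 * n))) : Prop :=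
  IsMatchingF n M ∧ NonCrossingF n M

/-- The plane tree `M` is valid for the word `P` (with complementation `comp`):
every matched pair consists of complementary letters. -/
def IsValidF {A : Type*} (n : ℕ) (P : Fin (2 * n) → A) (comp : A → A)
    (M : Finset (Fin (2 * n) × Fin (2 * n))) : Prop :=
  ∀ p ∈ M, P p.2 = comp (P p.1)


namespace CVW
/-! ### Matchings vs reduction -/

section Match

variable {A : Type*} (comp : A → A) (hinv : Function.Involutive comp)

/-- embedding skipping positions `k`, `k+1`. -/
def embF (n k : ℕ) (j : Fin (2*n)) : Fin (2*(n+1)) :=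
  ⟨if (j : ℕ) < k then (j : ℕ) else (j : ℕ) + 2, by
    have := j.2; split <;> omega⟩

theorem embF_val (n k : ℕ) (j : Fin (2*n)) :
    (embF n k j : ℕ) = if (j : ℕ) < k then (j : ℕ) else (j : ℕ) + 2 := rfl

theorem embF_lt_iff (n k : ℕ) (i j : Fin (2*n)) :
    embF n k i < embF n k j ↔ i < j := by
  simp only [Fin.lt_def, embF_val]
  split <;> split <;> omega

theorem embF_inj (n k : ℕ) {i j : Fin (2*n)} (h : embF n k i = embF n k j) : i = j := by
  have := congrArg Fin.val h
  simp only [embF_val] at this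
  apply Fin.ext
  split at this <;> split at this <;> omega

theorem embF_val_ne (n k : ℕ) (j : Fin (2*n)) :
    (embF n k j : ℕ) ≠ k ∧ (embF n k j : ℕ) ≠ k + 1 := by
  simp only [embF_val]
  split <;> omega

theorem embF_surj (n k : ℕ) (x : Fin (2*(n+1))) (hk : k + 1 < 2*(n+1))
    (h1 : (x : ℕ) ≠ k) (h2 : (x : ℕ) ≠ k + 1) : ∃ j, embF n k j = x := by
  by_cases hx : (x : ℕ) < k
  · exact ⟨⟨(x : ℕ), by have := x.2; omega⟩, by apply Fin.ext; simp [embF_val, hx]⟩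
  · refine ⟨⟨(x : ℕ) - 2, by have := x.2; omega⟩, ?_⟩
    apply Fin.ext
    have := x.2
    simp only [embF_val]
    rw [if_neg (by omega)]
    omega

theorem ofFn_comp_embF (n k : ℕ) (hk : k + 1 < 2*(n+1)) (P : Fin (2*(n+1)) → A) :
    List.ofFn (P ∘ embF n k) =
      (List.ofFn P).take k ++ (List.ofFn P).drop (k+2) := by
  have hlen : ((List.ofFn P).take k ++ (List.ofFn P).drop (k+2)).length = 2*n := by
    simp; omega
  apply List.ext_getElem (by simpa using hlen.symm)
  intro i hi hi2
  simp only [List.getElem_ofFn, Function.comp_apply]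
  by_cases hik : i < k
  · rw [List.getElem_append_left (by simp; omega)]
    rw [List.getElem_take, List.getElem_ofFn]
    congr 1
    apply Fin.ext
    simp [embF_val, hik]
  · rw [List.getElem_append_right (by simp; omega)]
    rw [List.getElem_drop, List.getElem_ofFn]
    congr 1
    apply Fin.ext
    simp only [embF_val, if_neg hik]
    simp only [List.length_take, List.length_ofFn]
    omega

theorem list_split {w : List A} {k : ℕ} (h : k + 1 < w.length) :
    w = w.take k ++ w[k] :: w[k+1] :: w.drop (k+2) := by
  conv_lhs => rw [← List.take_append_drop k w]
  congr 1
  rw [List.drop_eq_getElem_cons (by omega), List.drop_eq_getElem_cons h]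

theorem adj_arch (n : ℕ) (M : Finset (Fin (2*(n+1)) × Fin (2*(n+1))))
    (hM : IsPlaneTreeF (n+1) M) :
    ∃ (k : ℕ) (hk : k + 1 < 2*(n+1)),
      ((⟨k, by omega⟩ : Fin (2*(n+1))), (⟨k+1, hk⟩ : Fin (2*(n+1)))) ∈ M := by
  obtain ⟨⟨hord, hcov⟩, hnc⟩ := hM
  obtain ⟨p0, ⟨hp0M, _⟩, _⟩ := hcov ⟨0, by omega⟩
  obtain ⟨p, hpM, hmin⟩ := Finset.exists_min_image M (fun p => (p.2 : ℕ) - (p.1 : ℕ)) ⟨p0, hp0M⟩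
  have hlt : (p.1 : ℕ) < (p.2 : ℕ) := hord p hpM
  have key : (p.2 : ℕ) = (p.1 : ℕ) + 1 := by
    by_contra hne
    have hc2 : (p.1 : ℕ) + 1 < 2*(n+1) := by have := p.2.2; omega
    set c : Fin (2*(n+1)) := ⟨(p.1 : ℕ) + 1, hc2⟩ with hc
    obtain ⟨q, ⟨hqM, hqc⟩, _⟩ := hcov c
    have hqlt : (q.1 : ℕ) < (q.2 : ℕ) := hord q hqM
    rcases hqc with hq1 | hq2
    · -- q.1 = c
      have hq1v : (q.1 : ℕ) = (p.1 : ℕ) + 1 := by rw [hq1]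
      rcases lt_trichotomy (q.2 : ℕ) (p.2 : ℕ) with h | h | h
      · have := hmin q hqM
        omega
      · obtain ⟨r, hr, hru⟩ := hcov p.2
        have e1 : p = r := hru p ⟨hpM, Or.inr rfl⟩
        have e2 : q = r := hru q ⟨hqM, Or.inr (Fin.ext h)⟩
        rw [← e2] at e1
        have : (p.1 : ℕ) = (q.1 : ℕ) := by rw [e1]
        omega
      · exact hnc p hpM q hqM ⟨Fin.lt_def.2 (by omega),
          Fin.lt_def.2 (by omega), Fin.lt_def.2 (by omega)⟩
    · -- q.2 = c
      have hq2v : (q.2 : ℕ) = (p.1 : ℕ) + 1 := by rw [hq2]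
      rcases lt_trichotomy (q.1 : ℕ) (p.1 : ℕ) with h | h | h
      · exact hnc q hqM p hpM ⟨Fin.lt_def.2 (by omega),
          Fin.lt_def.2 (by omega), Fin.lt_def.2 (by omega)⟩
      · obtain ⟨r, hr, hru⟩ := hcov p.1
        have e1 : p = r := hru p ⟨hpM, Or.inl rfl⟩
        have e2 : q = r := hru q ⟨hqM, Or.inl (Fin.ext h)⟩
        rw [← e2] at e1
        have : (p.2 : ℕ) = (q.2 : ℕ) := by rw [e1]
        omega
      · omega
  refine ⟨(p.1 : ℕ), by have := p.2.2; omega, ?_⟩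
  have : ((⟨(p.1 : ℕ), by omega⟩ : Fin (2*(n+1))), (⟨(p.1 : ℕ)+1, by omega⟩ : Fin (2*(n+1)))) = p := by
    apply Prod.ext
    · apply Fin.ext; rfl
    · apply Fin.ext; simp [key.symm]
  rw [this]
  exact hpM

theorem restrict_matching (n k : ℕ) (hk : k + 1 < 2*(n+1))
    (P : Fin (2*(n+1)) → A) (M : Finset (Fin (2*(n+1)) × Fin (2*(n+1))))
    (hM : IsPlaneTreeF (n+1) M) (hV : IsValidF (n+1) P comp M)
    (hpair : ((⟨k, by omega⟩ : Fin (2*(n+1))), (⟨k+1, hk⟩ : Fin (2*(n+1)))) ∈ M) :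
    ∃ M', IsPlaneTreeF n M' ∧ IsValidF n (P ∘ embF n k) comp M' := by
  classical
  obtain ⟨⟨hord, hcov⟩, hnc⟩ := hM
  set pair0 : Fin (2*(n+1)) × Fin (2*(n+1)) := (⟨k, by omega⟩, ⟨k+1, hk⟩) with hp0
  refine ⟨Finset.univ.filter (fun q : Fin (2*n) × Fin (2*n) => (embF n k q.1, embF n k q.2) ∈ M), ?_, ?_⟩
  · refine ⟨⟨?_, ?_⟩, ?_⟩
    · intro q hq
      simp only [Finset.mem_filter] at hq
      have := hord _ hq.2
      exact (embF_lt_iff n k q.1 q.2).1 this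
    · intro j
      obtain ⟨p, ⟨hpM, hpc⟩, hpu⟩ := hcov (embF n k j)
      -- p is not pair0
      have hpne : p ≠ pair0 := by
        intro h
        rw [h] at hpc
        rcases hpc with h1 | h1
        · exact (embF_val_ne n k j).1 (by rw [← h1])
        · exact (embF_val_ne n k j).2 (by rw [← h1])
      -- endpoints of p avoid k, k+1
      have hend : ∀ x : Fin (2*(n+1)), (p.1 = x ∨ p.2 = x) → (x : ℕ) ≠ k ∧ (x : ℕ) ≠ k + 1 := by
        intro x hx
        constructor
        · intro hxv
          obtain ⟨r, hr, hru⟩ := hcov ⟨k, by omega⟩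
          have e1 : p = r := hru p ⟨hpM, by rcases hx with h|h; exacts [Or.inl (h.trans (Fin.ext hxv)), Or.inr (h.trans (Fin.ext hxv))]⟩
          have e2 : pair0 = r := hru pair0 ⟨hpair, Or.inl rfl⟩
          exact hpne (e1.trans e2.symm)
        · intro hxv
          obtain ⟨r, hr, hru⟩ := hcov ⟨k+1, hk⟩
          have e1 : p = r := hru p ⟨hpM, by rcases hx with h|h; exacts [Or.inl (h.trans (Fin.ext hxv)), Or.inr (h.trans (Fin.ext hxv))]⟩
          have e2 : pair0 = r := hru pair0 ⟨hpair, Or.inr rfl⟩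
          exact hpne (e1.trans e2.symm)
      obtain ⟨j1, hj1⟩ := embF_surj n k p.1 hk (hend p.1 (Or.inl rfl)).1 (hend p.1 (Or.inl rfl)).2
      obtain ⟨j2, hj2⟩ := embF_surj n k p.2 hk (hend p.2 (Or.inr rfl)).1 (hend p.2 (Or.inr rfl)).2
      refine ⟨(j1, j2), ⟨by simp only [Finset.mem_filter, Finset.mem_univ, true_and]; rw [hj1, hj2]; exact hpM, ?_⟩, ?_⟩
      · rcases hpc with h | h
        · exact Or.inl (embF_inj n k (by rw [hj1, h]))
        · exact Or.inr (embF_inj n k (by rw [hj2, h]))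
      · rintro q' ⟨hq'M, hq'c⟩
        simp only [Finset.mem_filter, Finset.mem_univ, true_and] at hq'M
        have hqp : (embF n k q'.1, embF n k q'.2) = p := by
          apply hpu
          refine ⟨hq'M, ?_⟩
          rcases hq'c with h | h
          · exact Or.inl (by rw [h])
          · exact Or.inr (by rw [h])
        have h1 : embF n k q'.1 = embF n k j1 := by rw [hj1, ← hqp]
        have h2 : embF n k q'.2 = embF n k j2 := by rw [hj2, ← hqp]
        exact Prod.ext (embF_inj n k h1) (embF_inj n k h2)
    · intro q hq r hr hcr
      simp only [Finset.mem_filter, Finset.mem_univ, true_and] at hq hr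
      exact hnc _ hq _ hr ⟨(embF_lt_iff n k _ _).2 hcr.1,
        (embF_lt_iff n k _ _).2 hcr.2.1, (embF_lt_iff n k _ _).2 hcr.2.2⟩
  · intro q hq
    simp only [Finset.mem_filter, Finset.mem_univ, true_and] at hq
    exact hV _ hq

theorem extend_matching (n k : ℕ) (hk : k + 1 < 2*(n+1))
    (P : Fin (2*(n+1)) → A)
    (hcomp : P ⟨k+1, hk⟩ = comp (P ⟨k, by omega⟩))
    (M' : Finset (Fin (2*n) × Fin (2*n)))
    (hM' : IsPlaneTreeF n M') (hV' : IsValidF n (P ∘ embF n k) comp M') :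
    ∃ M, IsPlaneTreeF (n+1) M ∧ IsValidF (n+1) P comp M := by
  classical
  obtain ⟨⟨hord, hcov⟩, hnc⟩ := hM'
  set pair0 : Fin (2*(n+1)) × Fin (2*(n+1)) := (⟨k, by omega⟩, ⟨k+1, hk⟩) with hp0
  set M : Finset (Fin (2*(n+1)) × Fin (2*(n+1))) :=
    M'.image (fun q => (embF n k q.1, embF n k q.2)) ∪ {pair0} with hM
  have memM : ∀ p, p ∈ M ↔ (∃ q ∈ M', (embF n k q.1, embF n k q.2) = p) ∨ p = pair0 := by
    intro p
    simp [hM, Finset.mem_union, Finset.mem_image]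
    exact or_comm
  refine ⟨M, ⟨⟨?_, ?_⟩, ?_⟩, ?_⟩
  · intro p hp
    rcases (memM p).1 hp with ⟨q, hq, rfl⟩ | rfl
    · exact (embF_lt_iff n k _ _).2 (hord q hq)
    · exact Fin.mk_lt_mk.2 (Nat.lt_succ_self k)
  · intro x
    by_cases hx1 : (x : ℕ) = k
    · refine ⟨pair0, ⟨(memM pair0).2 (Or.inr rfl), Or.inl (Fin.ext hx1.symm)⟩, ?_⟩
      rintro p ⟨hpM, hpc⟩
      rcases (memM p).1 hpM with ⟨q, hq, rfl⟩ | rfl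
      · exfalso
        rcases hpc with h | h
        · exact (embF_val_ne n k q.1).1 (by rw [← h] at hx1; exact hx1)
        · exact (embF_val_ne n k q.2).1 (by rw [← h] at hx1; exact hx1)
      · rfl
    · by_cases hx2 : (x : ℕ) = k + 1
      · refine ⟨pair0, ⟨(memM pair0).2 (Or.inr rfl), Or.inr (Fin.ext hx2.symm)⟩, ?_⟩
        rintro p ⟨hpM, hpc⟩
        rcases (memM p).1 hpM with ⟨q, hq, rfl⟩ | rfl
        · exfalso
          rcases hpc with h | h
          · exact (embF_val_ne n k q.1).2 (by rw [← h] at hx2; exact hx2)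
          · exact (embF_val_ne n k q.2).2 (by rw [← h] at hx2; exact hx2)
        · rfl
      · obtain ⟨j, hj⟩ := embF_surj n k x hk hx1 hx2
        obtain ⟨q, ⟨hq, hqc⟩, hqu⟩ := hcov j
        refine ⟨(embF n k q.1, embF n k q.2), ⟨(memM _).2 (Or.inl ⟨q, hq, rfl⟩), ?_⟩, ?_⟩
        · rcases hqc with h | h
          · exact Or.inl (by rw [h, hj])
          · exact Or.inr (by rw [h, hj])
        · rintro p ⟨hpM, hpc⟩
          rcases (memM p).1 hpM with ⟨q', hq', rfl⟩ | rfl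
          · have : q' = q := by
              apply hqu
              refine ⟨hq', ?_⟩
              rcases hpc with h | h
              · exact Or.inl (embF_inj n k (by rw [hj]; exact h))
              · exact Or.inr (embF_inj n k (by rw [hj]; exact h))
            rw [this]
          · exfalso
            rcases hpc with h | h
            · exact hx1 (by rw [← h])
            · exact hx2 (by rw [← h])
  · intro p hp q hq
    rcases (memM p).1 hp with ⟨p', hp', rfl⟩ | rfl <;>
      rcases (memM q).1 hq with ⟨q', hq', rfl⟩ | rfl
    · intro hcr
      exact hnc p' hp' q' hq' ⟨(embF_lt_iff n k _ _).1 hcr.1,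
        (embF_lt_iff n k _ _).1 hcr.2.1, (embF_lt_iff n k _ _).1 hcr.2.2⟩
    · rintro ⟨h1, h2, h3⟩
      have h2' := Fin.lt_def.1 h2
      have h3' := Fin.lt_def.1 h3
      have hk0 : ((pair0.1 : Fin (2*(n+1))) : ℕ) = k := rfl
      have hk1 : ((pair0.2 : Fin (2*(n+1))) : ℕ) = k + 1 := rfl
      have := (embF_val_ne n k p'.2)
      omega
    · rintro ⟨h1, h2, h3⟩
      have h1' := Fin.lt_def.1 h1
      have h2' := Fin.lt_def.1 h2
      have hk0 : ((pair0.1 : Fin (2*(n+1))) : ℕ) = k := rfl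
      have hk1 : ((pair0.2 : Fin (2*(n+1))) : ℕ) = k + 1 := rfl
      have := (embF_val_ne n k q'.1)
      omega
    · rintro ⟨h1, _, _⟩
      exact absurd h1 (lt_irrefl _)
  · intro p hp
    rcases (memM p).1 hp with ⟨q, hq, rfl⟩ | rfl
    · exact hV' q hq
    · exact hcomp

include hinv in
theorem valid_iff (n : ℕ) : ∀ P : Fin (2*n) → A,
    (∃ M, IsPlaneTreeF n M ∧ IsValidF n P comp M) ↔ Rl comp (List.ofFn P) = [] := by
  induction n with
  | zero =>
    intro P
    constructor
    · intro _
      have : List.ofFn P = [] := by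
        apply List.eq_nil_of_length_eq_zero; simp
      rw [this, Rl_nil]
    · intro _
      refine ⟨∅, ⟨⟨by simp, fun x => absurd x.isLt (by omega)⟩, ?_⟩, ?_⟩
      · intro p hp
        simp at hp
      · intro p hp
        simp at hp
  | succ n ih =>
    intro P
    constructor
    · rintro ⟨M, hM, hV⟩
      obtain ⟨k, hk, hpair⟩ := adj_arch n M hM
      obtain ⟨M', hM', hV'⟩ := restrict_matching comp n k hk P M hM hV hpair
      have h1 : Rl comp (List.ofFn (P ∘ embF n k)) = [] := (ih (P ∘ embF n k)).1 ⟨M', hM', hV'⟩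
      rw [ofFn_comp_embF n k hk P] at h1
      have hkk : k < 2*(n+1) := by omega
      have hPk : P ⟨k+1, hk⟩ = comp (P ⟨k, hkk⟩) := hV _ hpair
      have hklen : k + 1 < (List.ofFn P).length := by simp; omega
      have hsplit := list_split (w := List.ofFn P) (k := k) hklen
      have e1 : (List.ofFn P)[k+1]'hklen = comp ((List.ofFn P)[k]'(by omega)) := by
        rw [List.getElem_ofFn, List.getElem_ofFn]
        exact hPk
      have : Rl comp (List.ofFn P)
          = Rl comp ((List.ofFn P).take k ++ (List.ofFn P).drop (k+2)) := by
        conv_lhs => rw [hsplit]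
        rw [e1]
        exact Rl_cancel_pair comp hinv _ _ _
      rw [this]
      exact h1
    · intro hRl
      have hwne : List.ofFn P ≠ [] := by
        intro h
        have := congrArg List.length h
        simp at this
      obtain ⟨x, a, y, hdec⟩ := exists_adj_pair comp hinv hwne hRl
      set k := x.length with hkdef
      have hlen : (List.ofFn P).length = 2*(n+1) := by
        rw [List.length_ofFn]
      have hlen2 : k + 2 + y.length = 2*(n+1) := by
        rw [hdec] at hlen
        simp at hlen
        omega
      have hk : k + 1 < 2*(n+1) := by omega
      have htake : (List.ofFn P).take k = x := by rw [hdec]; exact List.take_left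
      have hdrop : (List.ofFn P).drop (k+2) = y := by
        rw [hdec]
        have h2 : x ++ a :: comp a :: y = (x ++ [a, comp a]) ++ y := by simp
        have h3 : k + 2 = (x ++ [a, comp a]).length := by simp [hkdef]
        rw [h2, h3, List.drop_left]
      have hgk : P ⟨k, by omega⟩ = a := by
        have h' : (List.ofFn P)[k]'(by omega) = a := by
          simp only [hdec]
          rw [List.getElem_append_right (Nat.le_refl _)]
          simp
        rw [List.getElem_ofFn] at h'
        exact h'
      have hgk1 : P ⟨k+1, hk⟩ = comp a := by
        have h' : (List.ofFn P)[k+1]'(by omega) = comp a := by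
          simp only [hdec]
          rw [List.getElem_append_right (by omega)]
          simp [hkdef]
        rw [List.getElem_ofFn] at h'
        exact h'
      have hPk : P ⟨k+1, hk⟩ = comp (P ⟨k, by omega⟩) := by rw [hgk, hgk1]
      have h1 : Rl comp (List.ofFn (P ∘ embF n k)) = [] := by
        rw [ofFn_comp_embF n k hk P, htake, hdrop]
        have h4 : Rl comp (x ++ y) = Rl comp (x ++ a :: comp a :: y) :=
          (Rl_cancel_pair comp hinv x y a).symm
        rw [h4, ← hdec]
        exact hRl
      obtain ⟨M', hM', hV'⟩ := (ih (P ∘ embF n k)).2 h1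
      exact extend_matching comp n k hk P hPk M' hM' hV'

end Match




/-! ### Counting -/

section Count

open scoped Classical

variable {A : Type*} [Fintype A] (comp : A → A) (hinv : Function.Involutive comp)

noncomputable def allW (A : Type*) [Fintype A] (L : ℕ) : Finset (List A) :=
  Finset.image List.ofFn (Finset.univ : Finset (Fin L → A))

theorem mem_allW {L : ℕ} {w : List A} : w ∈ allW A L ↔ w.length = L := by
  constructor
  · intro h
    simp only [allW, Finset.mem_image] at h
    obtain ⟨f, _, rfl⟩ := h
    simp
  · intro h
    simp only [allW, Finset.mem_image]
    refine ⟨fun i => w[(i : ℕ)]'(h ▸ i.2), Finset.mem_univ _, ?_⟩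
    apply List.ext_getElem (by simp [h])
    intro i h1 h2
    simp

noncomputable def Gset (B : Set (List A)) (t : ℕ) : Finset (List A) :=
  (allW A (2*t)).filter
    (fun w => Rl comp w = [] ∧ ∀ u, u <+: w → u ≠ [] → Rl comp u ∉ B)

noncomputable def FRH (b : A) (j : ℕ) : Finset (List A) :=
  (allW A (2*j)).filter
    (fun w => Rl comp w = [] ∧ w.head? = some b ∧
      ∀ u, u <+: w → u ≠ [] → u.length < w.length → Rl comp u ≠ [])

theorem mem_Gset {B : Set (List A)} {t : ℕ} {w : List A} :
    w ∈ Gset comp B t ↔ w.length = 2*t ∧ Rl comp w = [] ∧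
      ∀ u, u <+: w → u ≠ [] → Rl comp u ∉ B := by
  simp [Gset, mem_allW, and_assoc]

theorem mem_FRH {b : A} {j : ℕ} {w : List A} :
    w ∈ FRH comp b j ↔ w.length = 2*j ∧ Rl comp w = [] ∧ w.head? = some b ∧
      ∀ u, u <+: w → u ≠ [] → u.length < w.length → Rl comp u ≠ [] := by
  simp [FRH, mem_allW, and_assoc]

theorem Rl_cons (b : A) (q : List A) :
    Rl comp (b :: q) = q.foldl (step comp) [b] := by
  simp [Rl]

include hinv in
theorem FRH_eq (b : A) (j : ℕ) :
    FRH comp b (j+1) =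
      (Gset comp {[comp b]} j).image (fun y => b :: (y ++ [comp b])) := by
  ext w
  simp only [Finset.mem_image]
  constructor
  · intro hw
    rw [mem_FRH] at hw
    obtain ⟨hlen, hRl, hhead, hmin⟩ := hw
    obtain ⟨c, t, rfl⟩ : ∃ c t, w = c :: t := by
      cases w with
      | nil => simp at hhead
      | cons c t => exact ⟨c, t, rfl⟩
    have hc : b = c := by
      have := hhead
      simp only [List.head?_cons, Option.some.injEq] at this
      exact this.symm
    subst hc
    have htne : t ≠ [] := by
      intro h
      subst h
      simp at hlen
      omega
    have hty : t = t.dropLast ++ [t.getLast htne] := (List.dropLast_append_getLast htne).symm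
    set y := t.dropLast with hy
    set z := t.getLast htne with hz
    have hkey : ∀ q, q <+: y → q.foldl (step comp) [b] ≠ [] := by
      intro q hq
      have hpre : b :: q <+: b :: t := by
        rw [List.cons_prefix_cons]
        exact ⟨rfl, hq.trans (by rw [hty]; exact ⟨[z], rfl⟩)⟩
      have hlt : t.length = y.length + 1 := by
        conv_lhs => rw [hty]
        simp
      have hlq : (b :: q).length < (b :: t).length := by
        have := hq.length_le
        simp only [List.length_cons]
        omega
      have h2 := hmin (b :: q) hpre (by simp) hlq
      rw [Rl_cons] at h2
      exact h2
    have hbot := bottom₂ comp hinv (a := b) (p := y) hkey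
    have hRlw : step comp (y.foldl (step comp) [b]) z = [] := by
      have h3 : Rl comp (b :: t) = step comp (y.foldl (step comp) [b]) z := by
        conv_lhs => rw [hty]
        rw [Rl_cons]
        simp [List.foldl_append]
      rw [← h3]
      exact hRl
    rw [hbot] at hRlw
    have hfin : Rl comp y = [] ∧ z = comp b := by
      cases hRy : Rl comp y with
      | nil =>
        rw [hRy] at hRlw
        simp only [List.nil_append] at hRlw
        by_cases hbz : ([b] : List A).head? = some (comp z)
        · refine ⟨rfl, ?_⟩
          have hb : b = comp z := by simpa using hbz
          rw [hb, hinv]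
        · exfalso
          unfold step at hRlw
          rw [if_neg hbz] at hRlw
          simp at hRlw
      | cons h0 t0 =>
        exfalso
        rw [hRy] at hRlw
        unfold step at hRlw
        split at hRlw <;> simp at hRlw
    obtain ⟨hRly, hzb⟩ := hfin
    refine ⟨y, ?_, by rw [hty, hzb]⟩
    rw [mem_Gset]
    refine ⟨?_, hRly, ?_⟩
    · have h4 := congrArg List.length hty
      simp only [List.length_append, List.length_singleton] at h4
      simp only [List.length_cons] at hlen
      omega
    · intro u hu hune
      simp only [Set.mem_singleton_iff]
      intro hc
      exact Rl_ne_single comp hinv (fun q hq => hkey q (hq.trans hu)) hc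
  · rintro ⟨y, hy, rfl⟩
    rw [mem_Gset] at hy
    obtain ⟨hylen, hyRl, hycond⟩ := hy
    have hbase : ∀ p, p <+: y → p.foldl (step comp) [b] = Rl comp p ++ [b] := by
      intro p hp
      apply bottom₁ comp hinv
      intro q hq
      by_cases hq0 : q = []
      · subst hq0; simp
      · intro hc
        exact hycond q (hq.trans hp) hq0 (by rw [hc]; exact Set.mem_singleton _)
    rw [mem_FRH]
    refine ⟨by simp; omega, ?_, rfl, ?_⟩
    · rw [Rl_cons]
      rw [List.foldl_append, hbase y (by rfl), hyRl]
      simp only [List.nil_append, List.foldl_cons, List.foldl_nil]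
      unfold step
      rw [if_pos (by rw [hinv]; simp)]
      rfl
    · intro u hu hune hulen
      obtain ⟨c, q, rfl⟩ : ∃ c q, u = c :: q := by
        cases u with
        | nil => exact absurd rfl hune
        | cons c q => exact ⟨c, q, rfl⟩
      rw [List.cons_prefix_cons] at hu
      obtain ⟨rfl, hq⟩ := hu
      have hqy : q <+: y := by
        apply List.prefix_of_prefix_length_le hq (by exact ⟨[comp c], rfl⟩)
        simp at hulen
        omega
      rw [Rl_cons, hbase q hqy]
      simp

include hinv in
theorem card_FRH (b : A) (j : ℕ) :
    (FRH comp b (j+1)).card = (Gset comp {[comp b]} j).card := by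
  rw [FRH_eq comp hinv b j]
  apply Finset.card_image_of_injective
  intro y1 y2 h
  simp only [List.cons.injEq, true_and] at h
  exact List.append_left_injective [comp b] h

theorem Gset_zero (B : Set (List A)) : Gset comp B 0 = {[]} := by
  ext w
  rw [mem_Gset, Finset.mem_singleton]
  constructor
  · intro ⟨hl, _, _⟩
    exact List.length_eq_zero_iff.mp (by omega)
  · rintro rfl
    exact ⟨rfl, rfl, fun u hu hune => absurd (List.prefix_nil.mp hu) hune⟩

include hinv in
theorem Gset_split (B : Set (List A)) (hB : ∀ l ∈ B, ∃ c, l = [c])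
    (H : Finset A) (hH : ∀ b : A, b ∈ H ↔ ([b] : List A) ∉ B) (t : ℕ) :
    Gset comp B (t+1) =
      (Finset.range (t+1)).biUnion (fun s =>
        ((H.biUnion (fun b => FRH comp b (s+1))) ×ˢ Gset comp B (t-s)).image
          (fun p : List A × List A => p.1 ++ p.2)) := by
  ext w
  simp only [Finset.mem_biUnion, Finset.mem_range, Finset.mem_image, Finset.mem_product,
    Finset.mem_filter, Finset.mem_univ, true_and, Prod.exists]
  constructor
  · intro hw
    rw [mem_Gset] at hw
    obtain ⟨hlen, hRl, hcond⟩ := hw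
    have hPex : ∃ ℓ, 0 < ℓ ∧ Rl comp (w.take ℓ) = [] :=
      ⟨w.length, by omega, by rw [List.take_length]; exact hRl⟩
    set ℓ := Nat.find hPex with hℓ
    have hspec : 0 < ℓ ∧ Rl comp (w.take ℓ) = [] := Nat.find_spec hPex
    have hle : ℓ ≤ w.length :=
      Nat.find_min' hPex ⟨by omega, by rw [List.take_length]; exact hRl⟩
    have hulen : (w.take ℓ).length = ℓ := by
      rw [List.length_take]; omega
    have heven : Even ℓ := by
      have := even_length_of_Rl_nil comp hspec.2
      rwa [hulen] at this
    obtain ⟨d, hd⟩ := heven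
    have hd1 : 1 ≤ d := by omega
    have hsle : d - 1 < t + 1 := by omega
    have hs2 : ℓ = 2 * ((d-1) + 1) := by omega
    refine ⟨d - 1, hsle, w.take ℓ, w.drop ℓ, ⟨⟨?_, ?_⟩, List.take_append_drop ℓ w⟩⟩
    · -- take is in the FRH biUnion
      obtain ⟨c, q, hcq⟩ : ∃ c q, w.take ℓ = c :: q := by
        cases hu : w.take ℓ with
        | nil => rw [hu] at hulen; simp at hulen; omega
        | cons c q => exact ⟨c, q, rfl⟩
      have hcpre : [c] <+: w := by
        refine List.IsPrefix.trans ?_ (List.take_prefix ℓ w)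
        rw [hcq]
        exact ⟨q, rfl⟩
      have hcB : ([c] : List A) ∉ B := by
        have := hcond [c] hcpre (by simp)
        rwa [Rl_singleton] at this
      refine ⟨c, (hH c).mpr hcB, ?_⟩
      rw [mem_FRH]
      refine ⟨by rw [hulen, hs2], hspec.2, by rw [hcq]; rfl, ?_⟩
      intro p hp hpne hplen
      intro hc
      have hpw : p = w.take p.length :=
        List.prefix_iff_eq_take.mp (hp.trans (List.take_prefix ℓ w))
      refine Nat.find_min hPex (m := p.length) (by omega) ⟨?_, ?_⟩
      · have := List.length_pos_iff.mpr hpne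
        omega
      · rw [← hpw]; exact hc
    · -- drop is in Gset
      rw [mem_Gset]
      have hdlen : (w.drop ℓ).length = 2 * (t - (d-1)) := by
        rw [List.length_drop]
        omega
      have hRv : Rl comp (w.drop ℓ) = [] := by
        have h5 := Rl_append_nil comp (u := w.take ℓ) (v := w.drop ℓ) hspec.2
        rw [List.take_append_drop] at h5
        rw [← h5]; exact hRl
      refine ⟨hdlen, hRv, ?_⟩
      intro p hp hpne
      have h6 := Rl_append_nil comp (u := w.take ℓ) (v := p) hspec.2
      rw [← h6]
      refine hcond _ ?_ (fun h => hpne (List.append_eq_nil_iff.mp h).2)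
      have : w.take ℓ ++ p <+: w.take ℓ ++ w.drop ℓ :=
        (List.prefix_append_right_inj _).mpr hp
      rwa [List.take_append_drop] at this
  · rintro ⟨s, hst, u, v, ⟨⟨b, hbB, hu⟩, hv⟩, rfl⟩
    rw [mem_FRH] at hu
    rw [mem_Gset] at hv
    obtain ⟨hulen, huRl, huhead, humin⟩ := hu
    obtain ⟨hvlen, hvRl, hvcond⟩ := hv
    rw [mem_Gset]
    refine ⟨by simp only [List.length_append]; omega, ?_, ?_⟩
    · rw [Rl_append_nil comp huRl]; exact hvRl
    · intro p hp hpne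
      by_cases hpu : p.length ≤ u.length
      · have hpu' : p <+: u :=
          List.prefix_of_prefix_length_le hp (List.prefix_append u v) hpu
        by_cases heq : p.length = u.length
        · have hpeq : p = u := hpu'.eq_of_length heq
          rw [hpeq, huRl]
          intro hmem
          obtain ⟨c, hc⟩ := hB _ hmem
          simp at hc
        · obtain ⟨c, y, rfl⟩ : ∃ c y, u = c :: y := by
            cases u with
            | nil => simp at huhead
            | cons c y => exact ⟨c, y, rfl⟩
          have hcb : c = b := by simpa using huhead
          subst hcb
          obtain ⟨e, q, rfl⟩ : ∃ e q, p = e :: q := by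
            cases p with
            | nil => exact absurd rfl hpne
            | cons e q => exact ⟨e, q, rfl⟩
          rw [List.cons_prefix_cons] at hpu'
          obtain ⟨rfl, hqy⟩ := hpu'
          have hkey : ∀ q', q' <+: q → List.foldl (step comp) [e] q' ≠ [] := by
            intro q' hq'
            have hpre : e :: q' <+: e :: y :=
              List.cons_prefix_cons.mpr ⟨rfl, hq'.trans hqy⟩
            have hlq : (e :: q').length < (e :: y).length := by
              have h7 := hq'.length_le
              simp only [List.length_cons] at heq hpu ⊢
              omega
            have h8 := humin (e :: q') hpre (by simp) hlq
            rw [Rl_cons] at h8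
            exact h8
          have hbot := bottom₂ comp hinv (a := e) (p := q) hkey
          intro hmem
          rw [Rl_cons, hbot] at hmem
          obtain ⟨c0, hc0⟩ := hB _ hmem
          have h9 : Rl comp q = [] ∧ e = c0 := by
            cases hq0 : Rl comp q with
            | nil =>
              rw [hq0] at hc0
              simpa using hc0
            | cons h0 t0 =>
              exfalso
              rw [hq0] at hc0
              have := congrArg List.length hc0
              simp at this
          obtain ⟨hq0, rfl⟩ := h9
          rw [hq0] at hmem
          simp only [List.nil_append] at hmem
          exact (hH _).mp hbB hmem
      · have hup : u <+: p :=
          List.prefix_of_prefix_length_le (List.prefix_append u v) hp (by omega)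
        obtain ⟨p', rfl⟩ := hup
        have hp' : p' <+: v := (List.prefix_append_right_inj u).mp hp
        have hp'ne : p' ≠ [] := by
          rintro rfl
          simp at hpu
        rw [Rl_append_nil comp huRl]
        exact hvcond p' hp' hp'ne


include hinv in
theorem Gset_card_split (B : Set (List A)) (hB : ∀ l ∈ B, ∃ c, l = [c])
    (H : Finset A) (hH : ∀ b : A, b ∈ H ↔ ([b] : List A) ∉ B) (t : ℕ) :
    (Gset comp B (t+1)).card =
      ∑ s ∈ Finset.range (t+1),
        (∑ b ∈ H, (Gset comp {[comp b]} s).card) * (Gset comp B (t-s)).card := by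
  have key : ∀ s1 s2 : ℕ, s1 < s2 → ∀ w : List A,
      w ∈ ((H.biUnion (fun b => FRH comp b (s1+1))) ×ˢ Gset comp B (t-s1)).image
          (fun p : List A × List A => p.1 ++ p.2) →
      w ∈ ((H.biUnion (fun b => FRH comp b (s2+1))) ×ˢ Gset comp B (t-s2)).image
          (fun p : List A × List A => p.1 ++ p.2) → False := by
    intro s1 s2 h12 w hw1 hw2
    simp only [Finset.mem_image, Finset.mem_product, Finset.mem_biUnion, Finset.mem_filter,
      Finset.mem_univ, true_and, Prod.exists] at hw1 hw2
    obtain ⟨u1, v1, ⟨⟨b1, hb1, hu1⟩, hv1⟩, hw1e⟩ := hw1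
    obtain ⟨u2, v2, ⟨⟨b2, hb2, hu2⟩, hv2⟩, hw2e⟩ := hw2
    rw [mem_FRH] at hu1 hu2
    have hpre1 : u1 <+: w := by rw [← hw1e]; exact List.prefix_append u1 v1
    have hpre2 : u2 <+: w := by rw [← hw2e]; exact List.prefix_append u2 v2
    have h12' : u1.length < u2.length := by rw [hu1.1, hu2.1]; omega
    have hpp : u1 <+: u2 := List.prefix_of_prefix_length_le hpre1 hpre2 (by omega)
    refine hu2.2.2.2 u1 hpp ?_ h12' hu1.2.1
    intro h
    have := hu1.1
    rw [h] at this
    simp at this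
  rw [Gset_split comp hinv B hB H hH t]
  rw [Finset.card_biUnion]
  · apply Finset.sum_congr rfl
    intro s hs
    rw [Finset.card_image_of_injOn]
    · rw [Finset.card_product]
      congr 1
      rw [Finset.card_biUnion]
      · exact Finset.sum_congr rfl (fun b _ => card_FRH comp hinv b s)
      · intro b1 _ b2 _ hne
        rw [Function.onFun, Finset.disjoint_left]
        intro w hw1 hw2
        rw [mem_FRH] at hw1 hw2
        exact hne (by
          have h1 := hw1.2.2.1
          have h2 := hw2.2.2.1
          rw [h1] at h2
          exact Option.some_injective _ h2)
    · intro p1 hp1 p2 hp2 heq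
      simp only [Finset.coe_product, Set.mem_prod, Finset.mem_coe, Finset.mem_biUnion,
        Finset.mem_filter, Finset.mem_univ, true_and] at hp1 hp2
      obtain ⟨⟨b1, hb1, hu1⟩, hv1⟩ := hp1
      obtain ⟨⟨b2, hb2, hu2⟩, hv2⟩ := hp2
      rw [mem_FRH] at hu1 hu2
      have hl : p1.1.length = p2.1.length := by rw [hu1.1, hu2.1]
      obtain ⟨h1, h2⟩ := List.append_inj heq hl
      exact Prod.ext h1 h2
  · intro s1 hs1 s2 hs2 hne
    rw [Function.onFun, Finset.disjoint_left]
    intro w hw1 hw2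
    rcases Nat.lt_or_gt_of_ne hne with h | h
    · exact key s1 s2 h w hw1 hw2
    · exact key s2 s1 h w hw2 hw1


include hinv in
theorem Est_card (m : ℕ) (hcard : Fintype.card A = 2*m) :
    ∀ t : ℕ, ∀ a : A, (Gset comp {[comp a]} t).card = (2*m-1)^t * catalan t := by
  intro t
  induction t using Nat.strong_induction_on with
  | _ t ih =>
    intro a
    match t with
    | 0 =>
      rw [Gset_zero]
      simp
    | Nat.succ t =>
      have hH : ∀ b : A, b ∈ Finset.univ.erase (comp a) ↔
          ([b] : List A) ∉ ({[comp a]} : Set (List A)) := by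
        intro b
        simp [Finset.mem_erase, eq_comm]
      rw [Gset_card_split comp hinv _ (by rintro l hl; exact ⟨comp a, hl⟩)
        (Finset.univ.erase (comp a)) hH t]
      have hcarde : (Finset.univ.erase (comp a)).card = 2*m - 1 := by
        rw [Finset.card_erase_of_mem (Finset.mem_univ _), Finset.card_univ, hcard]
      have hterm : ∀ s ∈ Finset.range (t+1),
          (∑ b ∈ Finset.univ.erase (comp a), (Gset comp {[comp b]} s).card)
            * (Gset comp {[comp a]} (t-s)).card
          = (2*m-1)^(t+1) * (catalan s * catalan (t-s)) := by
        intro s hs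
        rw [Finset.mem_range] at hs
        have hsum1 : (∑ b ∈ Finset.univ.erase (comp a), (Gset comp {[comp b]} s).card)
            = (2*m-1) * ((2*m-1)^s * catalan s) := by
          rw [Finset.sum_congr rfl (fun b _ => ih s (by omega) b), Finset.sum_const, hcarde,
            smul_eq_mul]
        rw [hsum1, ih (t-s) (by omega) a]
        have hpow : (2*m-1) * (2*m-1)^s * (2*m-1)^(t-s) = (2*m-1)^(t+1) := by
          rw [show t+1 = 1 + s + (t-s) by omega, pow_add, pow_add, pow_one]
        calc (2*m-1) * ((2*m-1)^s * catalan s) * ((2*m-1)^(t-s) * catalan (t-s))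
            = ((2*m-1) * (2*m-1)^s * (2*m-1)^(t-s)) * (catalan s * catalan (t-s)) := by ring
          _ = (2*m-1)^(t+1) * (catalan s * catalan (t-s)) := by rw [hpow]
      refine (Finset.sum_congr rfl hterm).trans ?_
      rw [← Finset.mul_sum]
      congr 1
      rw [catalan_succ]
      exact (Fin.sum_univ_eq_sum_range _ _).symm

include hinv in
theorem Fst_card_rec (m : ℕ) (hcard : Fintype.card A = 2*m) (n : ℕ) :
    (Gset comp (∅ : Set (List A)) (n+1)).card =
      ∑ j ∈ Finset.range (n+1),
        (2*m * ((2*m-1)^j * catalan j)) * (Gset comp (∅ : Set (List A)) (n-j)).card := by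
  rw [Gset_card_split comp hinv ∅ (by simp) Finset.univ (by simp) n]
  apply Finset.sum_congr rfl
  intro j hj
  congr 1
  rw [Finset.sum_congr rfl (fun b _ => Est_card comp hinv m hcard j b), Finset.sum_const,
    Finset.card_univ, hcard, smul_eq_mul]

end Count

section Comps

/-- the summand of the composition sum. -/
def compTerm (m n : ℕ) (c : Composition n) : ℕ :=
  (2*m)^c.length * (2*m-1)^(n - c.length) * (c.blocks.map fun a => catalan (a-1)).prod

def consComp (n : ℕ) (x : Σ j : Fin (n+1), Composition (n - (j : ℕ))) : Composition (n+1) :=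
  ⟨((x.1 : ℕ) + 1) :: x.2.blocks,
   by
     intro i hi
     rcases List.mem_cons.mp hi with rfl | h
     · omega
     · exact x.2.blocks_pos h,
   by
     have h1 := x.2.blocks_sum
     have h2 := x.1.2
     simp only [List.sum_cons, h1]
     omega⟩

theorem consComp_bij (n : ℕ) : Function.Bijective (consComp n) := by
  constructor
  · rintro ⟨j1, c1⟩ ⟨j2, c2⟩ h
    have hb : ((j1 : ℕ) + 1) :: c1.blocks = ((j2 : ℕ) + 1) :: c2.blocks :=
      congrArg Composition.blocks h
    simp only [List.cons.injEq] at hb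
    have hj : j1 = j2 := Fin.ext (by omega)
    subst hj
    have hc : c1 = c2 := by ext1; exact hb.2
    rw [hc]
  · intro c
    have hne : c.blocks ≠ [] := by
      intro h
      have := c.blocks_sum
      rw [h] at this
      simp at this
    obtain ⟨h, tl, hb⟩ : ∃ h tl, c.blocks = h :: tl := by
      cases hbb : c.blocks with
      | nil => exact absurd hbb hne
      | cons h tl => exact ⟨h, tl, rfl⟩
    have hpos : 0 < h := c.blocks_pos (by rw [hb]; exact List.mem_cons_self)
    have hsum : h + tl.sum = n + 1 := by
      have := c.blocks_sum
      rw [hb] at this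
      simpa using this
    refine ⟨⟨⟨h - 1, by omega⟩, ⟨tl, ?_, ?_⟩⟩, ?_⟩
    · intro i hi
      exact c.blocks_pos (by rw [hb]; exact List.mem_cons_of_mem h hi)
    · simp only
      omega
    · ext1
      simp only [consComp]
      rw [hb]
      congr 1
      omega

theorem compTerm_cons (m n : ℕ) (j : Fin (n+1)) (c : Composition (n - (j : ℕ))) :
    compTerm m (n+1) (consComp n ⟨j, c⟩) =
      (2*m * ((2*m-1)^(j : ℕ) * catalan (j : ℕ))) * compTerm m (n - (j : ℕ)) c := by
  have hL : c.length ≤ n - (j : ℕ) := c.length_le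
  have hj : (j : ℕ) ≤ n := by omega
  unfold compTerm
  have hlen : (consComp n ⟨j, c⟩).length = c.length + 1 := by
    simp [consComp, Composition.length]
  have hblocks : (consComp n ⟨j, c⟩).blocks = ((j : ℕ) + 1) :: c.blocks := rfl
  rw [hlen, hblocks]
  simp only [List.map_cons, List.prod_cons, Nat.add_sub_cancel]
  rw [show (n + 1) - (c.length + 1) = (j : ℕ) + ((n - (j : ℕ)) - c.length) by omega]
  rw [pow_add, pow_succ]
  ring

theorem comp_sum_zero (m : ℕ) : (∑ c : Composition 0, compTerm m 0 c) = 1 := by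
  have hu : ∀ c : Composition 0, c.blocks = [] := by
    intro c
    cases hbb : c.blocks with
    | nil => rfl
    | cons h tl =>
      exfalso
      have hpos : 0 < h := c.blocks_pos (by rw [hbb]; exact List.mem_cons_self)
      have := c.blocks_sum
      rw [hbb] at this
      simp at this
      omega
  have hterm : ∀ c : Composition 0, compTerm m 0 c = 1 := by
    intro c
    have hl : c.length = 0 := by
      simp [Composition.length, hu c]
    unfold compTerm
    rw [hl, hu c]
    simp
  haveI : Unique (Composition 0) :=
    { default := ⟨[], by intro i hi; simp at hi, rfl⟩
      uniq := fun c => by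
        ext1
        rw [hu c] }
  rw [Fintype.sum_unique]
  exact hterm _

end Comps



theorem main_count {A : Type*} [Fintype A] (comp : A → A) (hinv : Function.Involutive comp)
    (m : ℕ) (hcard : Fintype.card A = 2*m) :
    ∀ n : ℕ, (Gset comp (∅ : Set (List A)) n).card = ∑ c : Composition n, compTerm m n c := by
  intro n
  induction n using Nat.strong_induction_on with
  | _ n ih =>
    match n with
    | 0 =>
      rw [Gset_zero, comp_sum_zero]
      simp
    | Nat.succ n =>
      rw [Fst_card_rec comp hinv m hcard n]
      calc ∑ j ∈ Finset.range (n+1),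
              (2*m * ((2*m-1)^j * catalan j)) * (Gset comp (∅ : Set (List A)) (n-j)).card
          = ∑ j : Fin (n+1), (2*m * ((2*m-1)^(j:ℕ) * catalan (j:ℕ)))
              * (Gset comp (∅ : Set (List A)) (n-(j:ℕ))).card :=
            (Fin.sum_univ_eq_sum_range _ _).symm
        _ = ∑ j : Fin (n+1), ∑ c : Composition (n - (j:ℕ)), compTerm m (n+1) (consComp n ⟨j, c⟩) := by
            apply Finset.sum_congr rfl
            intro j _
            rw [Finset.sum_congr rfl (fun c _ => compTerm_cons m n j c), ← Finset.mul_sum,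
              ← ih (n - (j:ℕ)) (by omega)]
        _ = ∑ x ∈ (Finset.univ : Finset (Fin (n+1))).sigma
              (fun j => (Finset.univ : Finset (Composition (n - (j:ℕ))))),
              compTerm m (n+1) (consComp n ⟨x.1, x.2⟩) := Finset.sum_sigma' _ _ _
        _ = ∑ x : (Σ j : Fin (n+1), Composition (n - (j:ℕ))), compTerm m (n+1) (consComp n x) := by
            rw [Finset.univ_sigma_univ]
        _ = ∑ c : Composition (n+1), compTerm m (n+1) c :=
            Fintype.sum_bijective (consComp n) (consComp_bij n) _ _ (fun x => rfl)

end CVW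

/-- Over a complementary alphabet with `2m` letters, the number
of words of length `2n` admitting at least one valid plane tree equals
`∑_{λ ⊨ n} (2m)^{k(λ)} (2m-1)^{n-k(λ)} ∏ᵢ C_{λᵢ-1}`, summed over the
compositions `λ = (λ₁,…,λ_k)` of `n`. -/
theorem count_valid_words {A : Type*} [Fintype A] (m : ℕ) (hm : 1 ≤ m)
    (hcard : Fintype.card A = 2 * m)
    (comp : A → A) (hinv : Function.Involutive comp) (hff : ∀ a, comp a ≠ a)
    (n : ℕ) :
    Set.ncard {P : Fin (2 * n) → A | ∃ M : Finset (Fin (2 * n) × Fin (2 * n)),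
        IsPlaneTreeF n M ∧ IsValidF n P comp M} =
      ∑ c : Composition n,
        (2 * m) ^ c.length * (2 * m - 1) ^ (n - c.length) *
          (c.blocks.map fun a => catalan (a - 1)).prod := by
  classical
  have hval : {P : Fin (2*n) → A | ∃ M : Finset (Fin (2 * n) × Fin (2 * n)),
        IsPlaneTreeF n M ∧ IsValidF n P comp M}
      = {P : Fin (2*n) → A | CVW.Rl comp (List.ofFn P) = []} :=
    Set.ext (fun P => CVW.valid_iff comp hinv n P)
  rw [hval]
  have himg : List.ofFn '' {P : Fin (2*n) → A | CVW.Rl comp (List.ofFn P) = []}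
      = ↑(CVW.Gset comp (∅ : Set (List A)) n) := by
    ext w
    simp only [Set.mem_image, Set.mem_setOf_eq, Finset.mem_coe]
    rw [CVW.mem_Gset]
    constructor
    · rintro ⟨P, hP, rfl⟩
      exact ⟨by simp, hP, fun u _ _ => by simp⟩
    · rintro ⟨hlen, hRl, -⟩
      have hw : List.ofFn (fun i : Fin (2*n) => w[(i:ℕ)]'(by rw [hlen]; exact i.2)) = w := by
        apply List.ext_getElem (by simp [hlen])
        intro i h1 h2
        simp
      exact ⟨fun i => w[(i:ℕ)]'(by rw [hlen]; exact i.2), by rw [hw]; exact hRl, hw⟩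
  have hinj : Function.Injective (List.ofFn : (Fin (2*n) → A) → List A) := List.ofFn_injective
  rw [← Set.ncard_image_of_injective _ hinj, himg, Set.ncard_coe_finset]
  rw [CVW.main_count comp hinv m hcard n]
  rfl
end

section
/- Fix m ≥ 2. Let P(n,m) be the set of words of length 2n over a complementary alphabet with 2m letters admitting at least one valid plane tree, and S(n,m) the set of all words of length 2n. Then |P(n,m)| ≤ (2m)^n · C_n, and consequently |P(n,m)|/|S(n,m)| ≤ C_n / (2m)^n ≤ (1/(n+1)) · binom(2n,n)/4^n → 0 as n → ∞. -/
namespace PT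
open DyckStep

/- ### Counting letters in lists built by `List.ofFn` -/

lemma count_ofFn_aux {N : ℕ} (f : Fin N → DyckStep) (s : DyckStep) :
    (List.ofFn f).count s = (Finset.univ.filter (fun i => f i = s)).card := by
  induction N with
  | zero => simp
  | succ n ih =>
    rw [List.ofFn_succ, List.count_cons, Fin.card_filter_univ_succ (fun i => f i = s)]
    rw [ih]
    simp only [beq_iff_eq]
    split_ifs with h <;> simp [h, Function.comp]

lemma count_take_ofFn {N : ℕ} (f : Fin N → DyckStep) (s : DyckStep) (k : ℕ) :
    ((List.ofFn f).take k).count s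
      = (Finset.univ.filter (fun i => f i = s ∧ i.val < k)).card := by
  rcases le_or_gt N k with hk | hk
  · rw [List.take_of_length_le (by simpa using hk), count_ofFn_aux]
    congr 1
    apply Finset.filter_congr
    intro i _
    simp [lt_of_lt_of_le i.isLt hk]
  · rw [← Fin.ofFn_take_eq_take_ofFn hk.le, count_ofFn_aux]
    apply Finset.card_bij (fun i _ => Fin.castLE hk.le i)
    · intro a ha
      simp only [Finset.mem_filter, Finset.mem_univ, true_and] at ha ⊢
      exact ⟨ha, a.isLt⟩
    · intro a _ b _ hab
      exact Fin.castLE_injective hk.le hab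
    · intro b hb
      simp only [Finset.mem_filter, Finset.mem_univ, true_and] at hb
      exact ⟨⟨b.val, hb.2⟩, Finset.mem_filter.mpr ⟨Finset.mem_univ _, hb.1⟩, by simp [Fin.castLE]⟩

/- ### Basic facts about perfect matchings -/

variable {n : ℕ} {M M' : Finset (Fin (2 * n) × Fin (2 * n))}

lemma pair_unique (hM : IsMatchingF n M) {p q} (hp : p ∈ M) (hq : q ∈ M) {k}
    (h1 : p.1 = k ∨ p.2 = k) (h2 : q.1 = k ∨ q.2 = k) : p = q :=
  ((hM.2 k).unique ⟨hp, h1⟩ ⟨hq, h2⟩)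

lemma not_mem_both (hM : IsMatchingF n M) {k} (h1 : k ∈ M.image Prod.fst)
    (h2 : k ∈ M.image Prod.snd) : False := by
  obtain ⟨p, hp, hp1⟩ := Finset.mem_image.mp h1
  obtain ⟨q, hq, hq1⟩ := Finset.mem_image.mp h2
  have := pair_unique hM hp hq (Or.inl hp1) (Or.inr hq1)
  subst this
  exact absurd (hp1.trans hq1.symm) (hM.1 p hp).ne

lemma snd_image_eq (hM : IsMatchingF n M) :
    M.image Prod.snd = Finset.univ \ M.image Prod.fst := by
  ext k
  simp only [Finset.mem_sdiff, Finset.mem_univ, true_and]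
  constructor
  · intro h h2; exact not_mem_both hM h2 h
  · intro h
    obtain ⟨p, ⟨hp, hk⟩, -⟩ := hM.2 k
    rcases hk with hk | hk
    · exact absurd (hk ▸ Finset.mem_image_of_mem Prod.fst hp) h
    · exact Finset.mem_image.mpr ⟨p, hp, hk⟩

lemma card_fst_image (hM : IsMatchingF n M) : (M.image Prod.fst).card = M.card :=
  Finset.card_image_of_injOn fun p hp q hq h =>
    pair_unique hM hp hq (Or.inl rfl) (Or.inl h.symm)

lemma card_snd_image (hM : IsMatchingF n M) : (M.image Prod.snd).card = M.card :=
  Finset.card_image_of_injOn fun p hp q hq h =>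
    pair_unique hM hp hq (Or.inr rfl) (Or.inr h.symm)

lemma card_fst_image_eq_n (hM : IsMatchingF n M) : (M.image Prod.fst).card = n := by
  have h1 := card_fst_image hM
  have h2 := card_snd_image hM
  have h3 := snd_image_eq hM
  have h4 : (M.image Prod.fst).card + (M.image Prod.snd).card = 2 * n := by
    rw [h3, Finset.card_sdiff_of_subset (Finset.subset_univ _)]
    have : (M.image Prod.fst).card ≤ 2 * n := by
      simpa using Finset.card_le_card (Finset.subset_univ (M.image Prod.fst))
    simp only [Finset.card_univ, Fintype.card_fin]
    omega
  omega

lemma prefix_ineq (hM : IsMatchingF n M) (k : ℕ) :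
    (Finset.univ.filter (fun i : Fin (2*n) => i ∈ M.image Prod.snd ∧ i.val < k)).card
      ≤ (Finset.univ.filter (fun i : Fin (2*n) => i ∈ M.image Prod.fst ∧ i.val < k)).card := by
  classical
  apply Finset.card_le_card_of_injOn (fun j => ((hM.2 j).exists.choose).1)
  · intro j hj
    simp only [Finset.mem_coe, Finset.mem_filter, Finset.mem_univ, true_and] at hj ⊢
    obtain ⟨hq, hqk⟩ := (hM.2 j).exists.choose_spec
    set q := (hM.2 j).exists.choose with hqdef
    have hq2 : q.2 = j := by
      rcases hqk with h | h
      · exact absurd (h ▸ Finset.mem_image_of_mem Prod.fst hq) (fun c => not_mem_both hM c hj.1)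
      · exact h
    refine ⟨Finset.mem_image_of_mem Prod.fst hq, ?_⟩
    have := hM.1 q hq
    have : (q.1 : ℕ) < (j : ℕ) := by rw [← hq2]; exact_mod_cast this
    omega
  · intro j hj j' hj' h
    simp only [Finset.mem_coe, Finset.mem_filter, Finset.mem_univ, true_and] at hj hj'
    obtain ⟨hq, hqk⟩ := (hM.2 j).exists.choose_spec
    obtain ⟨hq', hqk'⟩ := (hM.2 j').exists.choose_spec
    have hq2 : ((hM.2 j).exists.choose).2 = j := by
      rcases hqk with h2 | h2
      · exact absurd (h2 ▸ Finset.mem_image_of_mem Prod.fst hq) (fun c => not_mem_both hM c hj.1)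
      · exact h2
    have hq2' : ((hM.2 j').exists.choose).2 = j' := by
      rcases hqk' with h2 | h2
      · exact absurd (h2 ▸ Finset.mem_image_of_mem Prod.fst hq') (fun c => not_mem_both hM c hj'.1)
      · exact h2
    have := pair_unique hM hq hq' (Or.inl rfl) (Or.inl h.symm)
    rw [← hq2, ← hq2', this]

lemma nesting (hM : IsMatchingF n M) (hNC : NonCrossingF n M) {p q}
    (hp : p ∈ M) (hq : q ∈ M) (h1 : p.1 < q.1) (h2 : q.1 < p.2) : q.2 < p.2 := by
  have h3 := hNC p hp q hq
  have h4 : ¬ (p.2 < q.2) := fun c => h3 ⟨h1, h2, c⟩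
  rcases lt_or_eq_of_le (not_lt.mp h4) with h | h
  · exact h
  · exact absurd (congrArg Prod.fst (pair_unique hM hq hp (Or.inr h) (Or.inr rfl)))
      (by intro c; exact absurd (c ▸ h1) (lt_irrefl _))

/- ### A non-crossing perfect matching is determined by its left endpoints -/

lemma fst_eq_of_snd_eq (jv : ℕ) :
    ∀ (M M' : Finset (Fin (2 * n) × Fin (2 * n))),
    IsMatchingF n M → NonCrossingF n M → IsMatchingF n M' → NonCrossingF n M' →
    M.image Prod.fst = M'.image Prod.fst →
    ∀ p ∈ M, ∀ p' ∈ M', p.2 = p'.2 → (p.2 : ℕ) = jv → p.1 = p'.1 := by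
  induction jv using Nat.strong_induction_on with
  | _ jv IH =>
    have core : ∀ (M M' : Finset (Fin (2 * n) × Fin (2 * n))),
        IsMatchingF n M → NonCrossingF n M → IsMatchingF n M' → NonCrossingF n M' →
        M.image Prod.fst = M'.image Prod.fst →
        ∀ p ∈ M, ∀ p' ∈ M', p.2 = p'.2 → (p.2 : ℕ) = jv → p.1 < p'.1 → False := by
      intro M M' hM hNC hM' hNC' hL p hp p' hp' hsnd hjv hlt
      have h1 : p'.1 ∈ M.image Prod.fst := hL ▸ Finset.mem_image_of_mem Prod.fst hp'
      obtain ⟨q, hq, hq1⟩ := Finset.mem_image.mp h1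
      have hq1' : q.1 = p'.1 := hq1
      have hi'j : p'.1 < p.2 := hsnd ▸ hM'.1 p' hp'
      have hq2lt : q.2 < p.2 := nesting hM hNC hp hq (hq1' ▸ hlt) (hq1' ▸ hi'j)
      have h2 : q.2 ∈ M'.image Prod.snd := by
        rw [snd_image_eq hM', ← hL, ← snd_image_eq hM]
        exact Finset.mem_image_of_mem Prod.snd hq
      obtain ⟨p'', hp'', hp''2⟩ := Finset.mem_image.mp h2
      have hIH := IH (q.2 : ℕ) (by omega) M M' hM hNC hM' hNC' hL q hq p'' hp'' hp''2.symm rfl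
      have : p'' = p' := pair_unique hM' hp'' hp' (Or.inl (hIH ▸ hq1')) (Or.inl rfl)
      rw [this] at hp''2
      rw [hsnd] at hq2lt
      exact absurd (hp''2 ▸ hq2lt) (lt_irrefl _)
    intro M M' hM hNC hM' hNC' hL p hp p' hp' hsnd hjv
    rcases lt_trichotomy p.1 p'.1 with h | h | h
    · exact absurd (core M M' hM hNC hM' hNC' hL p hp p' hp' hsnd hjv h) id
    · exact h
    · exact absurd (core M' M hM' hNC' hM hNC hL.symm p' hp' p hp hsnd.symm (hsnd ▸ hjv) h) id

theorem matching_ext (hM : IsMatchingF n M) (hNC : NonCrossingF n M)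
    (hM' : IsMatchingF n M') (hNC' : NonCrossingF n M')
    (hL : M.image Prod.fst = M'.image Prod.fst) : M = M' := by
  have key : ∀ (N N' : Finset (Fin (2 * n) × Fin (2 * n))),
      IsMatchingF n N → NonCrossingF n N → IsMatchingF n N' → NonCrossingF n N' →
      N.image Prod.fst = N'.image Prod.fst → N ⊆ N' := by
    intro N N' hN hNCN hN' hNCN' hLN p hp
    have h2 : p.2 ∈ N'.image Prod.snd := by
      rw [snd_image_eq hN', ← hLN, ← snd_image_eq hN]
      exact Finset.mem_image_of_mem Prod.snd hp
    obtain ⟨p', hp', hp'2⟩ := Finset.mem_image.mp h2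
    have := fst_eq_of_snd_eq (p.2 : ℕ) N N' hN hNCN hN' hNCN' hLN p hp p' hp' hp'2.symm rfl
    have : p = p' := Prod.ext this hp'2.symm
    exact this ▸ hp'
  exact Finset.Subset.antisymm (key M M' hM hNC hM' hNC' hL) (key M' M hM' hNC' hM hNC hL.symm)

/- ### The Dyck word of a matching -/

/-- The Dyck word associated to a perfect matching on `Fin (2*n)`. -/
noncomputable def toDyck (hM : IsMatchingF n M) : DyckWord where
  toList := List.ofFn (fun i : Fin (2*n) =>
    if i ∈ M.image Prod.fst then U else D)
  count_U_eq_count_D := by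
    classical
    rw [count_ofFn_aux, count_ofFn_aux]
    have e1 : (Finset.univ.filter
        (fun i : Fin (2*n) => (if i ∈ M.image Prod.fst then U else D) = U))
        = M.image Prod.fst := by
      ext i; simp only [Finset.mem_filter, Finset.mem_univ, true_and]
      split <;> simp_all
    have e2 : (Finset.univ.filter
        (fun i : Fin (2*n) => (if i ∈ M.image Prod.fst then U else D) = D))
        = Finset.univ \ M.image Prod.fst := by
      ext i; simp only [Finset.mem_filter, Finset.mem_univ, true_and, Finset.mem_sdiff]
      split <;> simp_all
    rw [e1, e2, card_fst_image_eq_n hM, Finset.card_sdiff_of_subset (Finset.subset_univ _),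
      Finset.card_univ, Fintype.card_fin, card_fst_image_eq_n hM]
    omega
  count_D_le_count_U := by
    classical
    intro k
    rw [count_take_ofFn, count_take_ofFn]
    have e1 : (Finset.univ.filter
        (fun i : Fin (2*n) => (if i ∈ M.image Prod.fst then U else D) = U ∧ i.val < k))
        = Finset.univ.filter (fun i : Fin (2*n) => i ∈ M.image Prod.fst ∧ i.val < k) := by
      ext i; simp only [Finset.mem_filter, Finset.mem_univ, true_and]
      constructor
      · rintro ⟨h1, h2⟩; refine ⟨?_, h2⟩; by_contra hc; simp [hc] at h1
      · rintro ⟨h1, h2⟩; exact ⟨by simp [h1], h2⟩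
    have e2 : (Finset.univ.filter
        (fun i : Fin (2*n) => (if i ∈ M.image Prod.fst then U else D) = D ∧ i.val < k))
        = Finset.univ.filter (fun i : Fin (2*n) => i ∈ M.image Prod.snd ∧ i.val < k) := by
      ext i
      by_cases hc : i ∈ M.image Prod.fst <;> simp [hc, snd_image_eq hM]
    rw [e1, e2]
    exact prefix_ineq hM k

lemma toDyck_toList (hM : IsMatchingF n M) :
    (toDyck hM).toList = List.ofFn (fun i : Fin (2*n) =>
      if i ∈ M.image Prod.fst then U else D) := rfl

lemma toDyck_semilength (hM : IsMatchingF n M) : (toDyck hM).semilength = n := by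
  classical
  show (toDyck hM).toList.count U = n
  rw [toDyck_toList hM, count_ofFn_aux]
  have e1 : (Finset.univ.filter
      (fun i : Fin (2*n) => (if i ∈ M.image Prod.fst then U else D) = U))
      = M.image Prod.fst := by
    ext i; simp only [Finset.mem_filter, Finset.mem_univ, true_and]
    split <;> simp_all
  rw [e1, card_fst_image_eq_n hM]

/- ### The injection and the cardinality bound -/

lemma card_bound {A : Type*} [Fintype A] (m n : ℕ) (hcard : Fintype.card A = 2 * m)
    (comp : A → A) :
    Set.ncard {P : Fin (2 * n) → A |
        ∃ M : Finset (Fin (2 * n) × Fin (2 * n)),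
          IsPlaneTreeF n M ∧ IsValidF n P comp M} ≤ (2 * m) ^ n * catalan n := by
  classical
  set V := {P : Fin (2 * n) → A |
      ∃ M : Finset (Fin (2 * n) × Fin (2 * n)),
        IsPlaneTreeF n M ∧ IsValidF n P comp M} with hV
  -- the encoding map
  set F : V → ({p : DyckWord // p.semilength = n} × (Fin n → A)) := fun x =>
    (⟨toDyck x.2.choose_spec.1.1, toDyck_semilength x.2.choose_spec.1.1⟩,
      fun i => x.1 ((x.2.choose.image Prod.fst).orderEmbOfFin
        (card_fst_image_eq_n x.2.choose_spec.1.1) i)) with hF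
  have hinj : Function.Injective F := by
    intro x y hxy
    have hd : toDyck x.2.choose_spec.1.1 = toDyck y.2.choose_spec.1.1 := by
      have := congrArg Prod.fst hxy
      exact Subtype.ext_iff.mp this
    have hlist := congrArg DyckWord.toList hd
    rw [toDyck_toList, toDyck_toList] at hlist
    have hfun := List.ofFn_injective hlist
    have hL : x.2.choose.image Prod.fst = y.2.choose.image Prod.fst := by
      ext i
      have := congrFun hfun i
      by_cases h1 : i ∈ x.2.choose.image Prod.fst <;>
        by_cases h2 : i ∈ y.2.choose.image Prod.fst <;> simp_all
    have hML : x.2.choose = y.2.choose :=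
      matching_ext x.2.choose_spec.1.1 x.2.choose_spec.1.2
        y.2.choose_spec.1.1 y.2.choose_spec.1.2 hL
    -- the two order embeddings agree
    have hemb : ∀ i : Fin n,
        ((x.2.choose.image Prod.fst).orderEmbOfFin
          (card_fst_image_eq_n x.2.choose_spec.1.1) i : Fin (2*n))
        = (y.2.choose.image Prod.fst).orderEmbOfFin
          (card_fst_image_eq_n y.2.choose_spec.1.1) i := by
      have h := Finset.orderEmbOfFin_unique
        (card_fst_image_eq_n x.2.choose_spec.1.1)
        (f := fun i => ((y.2.choose.image Prod.fst).orderEmbOfFin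
          (card_fst_image_eq_n y.2.choose_spec.1.1) i : Fin (2*n)))
        (fun i => by
          rw [hL, ← Finset.mem_coe, ← Finset.range_orderEmbOfFin (y.2.choose.image Prod.fst)
            (card_fst_image_eq_n y.2.choose_spec.1.1)]
          exact Set.mem_range_self i)
        ((y.2.choose.image Prod.fst).orderEmbOfFin
          (card_fst_image_eq_n y.2.choose_spec.1.1)).strictMono
      intro i
      exact (congrFun h i).symm
    -- agreement on left endpoints
    have hsnd := congrArg Prod.snd hxy
    have agree : ∀ k ∈ x.2.choose.image Prod.fst, x.1 k = y.1 k := by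
      intro k hk
      have : (k : Fin (2*n)) ∈ Set.range ((x.2.choose.image Prod.fst).orderEmbOfFin
          (card_fst_image_eq_n x.2.choose_spec.1.1)) := by
        rw [Finset.range_orderEmbOfFin]
        exact hk
      obtain ⟨i, hi⟩ := this
      have h1 := congrFun hsnd i
      simp only [hF] at h1
      rw [← hi, h1, ← hemb i]
    -- conclude the words are equal
    apply Subtype.ext
    funext k
    by_cases hk : k ∈ x.2.choose.image Prod.fst
    · exact agree k hk
    · have hk2 : k ∈ x.2.choose.image Prod.snd := by
        rw [snd_image_eq x.2.choose_spec.1.1]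
        simp [hk]
      obtain ⟨p, hp, hp2⟩ := Finset.mem_image.mp hk2
      have hx := x.2.choose_spec.2 p hp
      have hy := y.2.choose_spec.2 p (hML ▸ hp)
      rw [hp2] at hx hy
      rw [hx, hy, agree p.1 (Finset.mem_image_of_mem Prod.fst hp)]
  -- cardinality computation
  have hle : Set.ncard V ≤
      Fintype.card ({p : DyckWord // p.semilength = n} × (Fin n → A)) := by
    rw [Set.ncard_eq_toFinset_card']
    have := Fintype.card_le_of_injective F hinj
    rw [Set.toFinset_card]
    exact this
  calc Set.ncard V ≤ _ := hle
    _ = catalan n * (2 * m) ^ n := by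
        rw [Fintype.card_prod, DyckWord.card_dyckWord_semilength_eq_catalan,
          Fintype.card_fun, hcard, Fintype.card_fin]
    _ = (2 * m) ^ n * catalan n := mul_comm _ _

lemma centralBinom_le_four_pow (n : ℕ) : Nat.centralBinom n ≤ 4 ^ n := by
  have h1 : Nat.centralBinom n ≤ ∑ i ∈ Finset.range (2 * n + 1), (2 * n).choose i := by
    apply Finset.single_le_sum (f := fun i => (2 * n).choose i)
    · intro i _; exact Nat.zero_le _
    · simp only [Finset.mem_range]; omega
  rw [Nat.sum_range_choose] at h1
  calc Nat.centralBinom n ≤ 2 ^ (2 * n) := h1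
    _ = 4 ^ n := by rw [show (4 : ℕ) = 2 ^ 2 from rfl, ← pow_mul]

end PT

/-- For an alphabet with `2m` letters (`m ≥ 2`), the number of
valid words of length `2n` is at most `(2m)^n · C_n`, and the proportion of
valid words among all `(2m)^{2n}` words tends to `0` as `n → ∞`. -/
theorem ratio_valid_words_tendsto_zero {A : Type*} [Fintype A] (m : ℕ)
    (hm : 2 ≤ m) (hcard : Fintype.card A = 2 * m)
    (comp : A → A) (hinv : Function.Involutive comp) (hff : ∀ a, comp a ≠ a) :
    (∀ n : ℕ, Set.ncard {P : Fin (2 * n) → A |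
        ∃ M : Finset (Fin (2 * n) × Fin (2 * n)),
          IsPlaneTreeF n M ∧ IsValidF n P comp M} ≤ (2 * m) ^ n * catalan n) ∧
    Filter.Tendsto (fun n : ℕ =>
        (Set.ncard {P : Fin (2 * n) → A |
          ∃ M : Finset (Fin (2 * n) × Fin (2 * n)),
            IsPlaneTreeF n M ∧ IsValidF n P comp M} : ℝ) / (2 * m) ^ (2 * n))
      Filter.atTop (nhds 0) := by
  have hbound := fun n => PT.card_bound (A := A) m n hcard comp
  refine ⟨hbound, ?_⟩
  set c : ℕ → ℕ := fun n => Set.ncard {P : Fin (2 * n) → A |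
      ∃ M : Finset (Fin (2 * n) × Fin (2 * n)),
        IsPlaneTreeF n M ∧ IsValidF n P comp M} with hc
  have key : ∀ n : ℕ, (n + 1) * c n ≤ (2 * m) ^ (2 * n) := by
    intro n
    calc (n + 1) * c n ≤ (n + 1) * ((2 * m) ^ n * catalan n) :=
          Nat.mul_le_mul_left _ (hbound n)
      _ = (2 * m) ^ n * ((n + 1) * catalan n) := by ring
      _ = (2 * m) ^ n * Nat.centralBinom n := by rw [succ_mul_catalan_eq_centralBinom]
      _ ≤ (2 * m) ^ n * 4 ^ n :=
          Nat.mul_le_mul_left _ (PT.centralBinom_le_four_pow n)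
      _ ≤ (2 * m) ^ n * (2 * m) ^ n :=
          Nat.mul_le_mul_left _ (Nat.pow_le_pow_left (by omega) n)
      _ = (2 * m) ^ (2 * n) := by rw [← pow_add]; ring_nf
  have hm0 : (0 : ℝ) < 2 * (m : ℝ) := by positivity
  have hub : ∀ n : ℕ, (c n : ℝ) / (2 * m) ^ (2 * n) ≤ 1 / ((n : ℝ) + 1) := by
    intro n
    rw [div_le_div_iff₀ (by positivity) (by positivity)]
    have := key n
    have hcast : ((n + 1 : ℕ) : ℝ) * (c n : ℝ) ≤ ((2 * m) ^ (2 * n) : ℕ) := by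
      rw [← Nat.cast_mul]
      exact_mod_cast this
    push_cast at hcast ⊢
    nlinarith [hcast]
  have hlb : ∀ n : ℕ, (0 : ℝ) ≤ (c n : ℝ) / (2 * m) ^ (2 * n) := by
    intro n; positivity
  exact tendsto_of_tendsto_of_tendsto_of_le_of_le tendsto_const_nhds
    tendsto_one_div_add_atTop_nhds_zero_nat hlb hub
end
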